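/- Let T be a transcendence basis of ℝ over the field A = alg_ℝ(ℚ) of real algebraic numbers, and suppose x₀,…,x_k are reals, each xⱼ algebraic over A(Sⱼ) for finite sets Sⱼ ⊆ T, such that each xⱼ has a distinguished element tⱼ ∈ Sⱼ with xⱼ not algebraic over A(T \ {tⱼ}), and the tⱼ are pairwise distinct with t_k maximal in the sense that t_k ∉ S_i for all i < k. If x₀,…,x_{k-1} are algebraically independent over A, then x₀,…,x_k are algebraically independent over A. -/

import Mathlib

set_option maxHeartbeats 1000000

theorem stmt10 (A : IntermediateField ℚ ℝ) (hA : ∀ x : ℝ, x ∈ A ↔ IsAlgebraic ℚ x)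
    (T : Set ℝ) (hT : IsTranscendenceBasis A ((↑) : T → ℝ))
    (k : ℕ) (x : Fin (k + 1) → ℝ) (S : Fin (k + 1) → Finset ℝ)
    (hST : ∀ j, ↑(S j) ⊆ T)
    (halg : ∀ j, IsAlgebraic (IntermediateField.adjoin A ((S j : Set ℝ))) (x j))
    (t : Fin (k + 1) → ℝ) (ht : ∀ j, t j ∈ S j)
    (hnot : ∀ j, ¬ IsAlgebraic (IntermediateField.adjoin A (T \ {t j})) (x j))
    (htinj : Function.Injective t)
    (hmax : ∀ i : Fin (k + 1), i ≠ Fin.last k → t (Fin.last k) ∉ S i)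
    (hind : AlgebraicIndependent A (fun i : Fin k => x i.castSucc)) :
    AlgebraicIndependent A x := by
  classical
  set F : IntermediateField A ℝ := IntermediateField.adjoin A (T \ {t (Fin.last k)}) with hF
  -- each x i.castSucc is algebraic over F
  have H1 : ∀ i : Fin k, IsAlgebraic F (x i.castSucc) := by
    intro i
    have hne : i.castSucc ≠ Fin.last k := (Fin.castSucc_lt_last i).ne
    have hsub : (S i.castSucc : Set ℝ) ⊆ T \ {t (Fin.last k)} := by
      intro y hy
      exact ⟨hST _ hy, fun hyt => hmax i.castSucc hne (hyt ▸ hy)⟩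
    have hle : IntermediateField.adjoin A ((S i.castSucc : Set ℝ)) ≤ F :=
      IntermediateField.adjoin.mono _ _ _ hsub
    exact IsAlgebraic.tower_top_of_subalgebra_le
      (A := (IntermediateField.adjoin A ((S i.castSucc : Set ℝ))).toSubalgebra)
      (B := F.toSubalgebra) hle (halg i.castSucc)
  -- x (last) is transcendental over A(x_0,...,x_{k-1})
  have htr : Transcendental (Algebra.adjoin A (Set.range fun i : Fin k => x i.castSucc))
      (x (Fin.last k)) := by
    intro hlast
    set E : IntermediateField F ℝ :=
      IntermediateField.adjoin F (Set.range fun i : Fin k => x i.castSucc) with hE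
    have hle : Algebra.adjoin A (Set.range fun i : Fin k => x i.castSucc) ≤
        Subalgebra.restrictScalars A E.toSubalgebra := by
      rw [Algebra.adjoin_le_iff]
      intro y hy
      show y ∈ E.toSubalgebra
      exact IntermediateField.subset_adjoin _ _ hy
    have hlast' : IsAlgebraic (Subalgebra.restrictScalars A E.toSubalgebra) (x (Fin.last k)) :=
      IsAlgebraic.tower_top_of_subalgebra_le hle hlast
    have hlastE : IsAlgebraic E (x (Fin.last k)) := hlast'
    have hEalg : Algebra.IsAlgebraic F E := by
      apply IntermediateField.isAlgebraic_adjoin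
      rintro y ⟨i, rfl⟩
      exact (H1 i).isIntegral
    have : IsIntegral F (x (Fin.last k)) := by
      have h2 : IsIntegral E (x (Fin.last k)) := hlastE.isIntegral
      have h1 : Algebra.IsIntegral F E := Algebra.isAlgebraic_iff_isIntegral.mp hEalg
      exact isIntegral_trans _ h2
    exact hnot (Fin.last k) this.isAlgebraic
  have hopt := (hind.option_iff_transcendental (x (Fin.last k))).2 htr
  have hcomp : x = (fun o : Option (Fin k) => o.elim (x (Fin.last k))
      (fun i : Fin k => x i.castSucc)) ∘ (Fin.lastCases none some) := by
    funext j
    refine Fin.lastCases ?_ ?_ j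
    · simp
    · intro i; simp
  rw [hcomp]
  have hinj : Function.Injective
      (Fin.lastCases (motive := fun _ => Option (Fin k)) none some) := by
    intro a b hab
    induction a using Fin.lastCases <;> induction b using Fin.lastCases <;>
      simp only [Fin.lastCases_last, Fin.lastCases_castSucc] at hab
    · rfl
    · cases hab
    · cases hab
    · rw [Option.some_inj] at hab; rw [hab]
  exact hopt.comp _ hinj
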